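/- Let N ≥ 1 be an integer and s > 0. Then there exists a constant c > 0 (depending only on N and s) such that for every d ≥ 8 and every point ξ¹ ∈ ℝ^N with |ξ¹| = (5/4)d, one has ∫_{B_{d/8}(ξ¹)} ∫_{B_{d/8}(0)} [ (1+|x|^{N+2s}) (1+|y|^{N+2s}) |x−y|^{N+2s} ]^{−1} dy dx ≥ c d^{−(N+4s)}. -/

import Mathlib

open MeasureTheory Metric

/-- Double-integral lower bound (with `ρ = 1/8`) giving the lower bound
`τ_{ε,ξ} ≥ c₁ ε^N (ε/d(ξ,∂Ω))^{N+4s}` in Lemma 4.2. -/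
theorem double_integral_lower_bound
    (N : ℕ) (hN : 1 ≤ N) (s : ℝ) (hs : 0 < s) :
    ∃ c : ℝ, 0 < c ∧
      ∀ d : ℝ, 8 ≤ d →
        ∀ ξ₁ : EuclideanSpace ℝ (Fin N), ‖ξ₁‖ = 5 / 4 * d →
          c * d ^ (-((N : ℝ) + 4 * s)) ≤
            ∫ x in ball ξ₁ (d / 8),
              ∫ y in ball (0 : EuclideanSpace ℝ (Fin N)) (d / 8),
                ((1 + ‖x‖ ^ ((N : ℝ) + 2 * s)) * (1 + ‖y‖ ^ ((N : ℝ) + 2 * s)) *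
                  ‖x - y‖ ^ ((N : ℝ) + 2 * s))⁻¹ := by
  classical
  set E := EuclideanSpace ℝ (Fin N)
  set p : ℝ := (N : ℝ) + 2 * s with hp_def
  have hN1 : (1 : ℝ) ≤ (N : ℝ) := by exact_mod_cast hN
  have hp : 0 < p := by simp only [hp_def]; nlinarith
  have hnontriv : Nontrivial E := by
    have : 0 < Module.finrank ℝ E := by
      rw [finrank_euclideanSpace_fin]; omega
    exact Module.nontrivial_of_finrank_pos this
  set ω : ℝ := (volume (ball (0 : E) 1)).toReal with hω_def
  have hω : 0 < ω := by
    apply ENNReal.toReal_pos (measure_ball_pos volume 0 one_pos).ne'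
      measure_ball_lt_top.ne
  set K : ℝ := 2 * (1 + 2 ^ p) * 2 ^ p with hK_def
  have h2p : (0:ℝ) < 2 ^ p := Real.rpow_pos_of_pos two_pos p
  have hK : 0 < K := by positivity
  refine ⟨K⁻¹ * ω ^ 2 / 8 ^ N, by positivity, ?_⟩
  intro d hd ξ₁ hξ
  have hd0 : (0:ℝ) < d := by linarith
  have hr : (0:ℝ) < d / 8 := by linarith
  have hr1 : (1:ℝ) ≤ d / 8 := by linarith
  set g : E → E → ℝ := fun x y =>
    ((1 + ‖x‖ ^ p) * (1 + ‖y‖ ^ p) * ‖x - y‖ ^ p)⁻¹ with hg_def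
  set S : Set E := ball ξ₁ (d / 8) with hS_def
  set T : Set E := ball (0 : E) (d / 8) with hT_def
  have hTsub : ball (0 : E) 1 ⊆ T := ball_subset_ball hr1
  -- norms on S, T
  have hxnorm : ∀ x ∈ S, ‖x‖ ≤ 11 / 8 * d := by
    intro x hx
    have h1 : ‖x‖ - ‖ξ₁‖ ≤ ‖x - ξ₁‖ := norm_sub_norm_le x ξ₁
    have h2 : ‖x - ξ₁‖ < d / 8 := by rwa [mem_ball_iff_norm] at hx
    rw [hξ] at h1
    linarith
  have hdist : ∀ x ∈ S, ∀ y ∈ T, d ≤ ‖x - y‖ := by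
    intro x hx y hy
    have h1 : ‖x - ξ₁‖ < d / 8 := by rwa [mem_ball_iff_norm] at hx
    have h2 : ‖y‖ < d / 8 := by rwa [mem_ball_zero_iff] at hy
    have h3 : ‖ξ₁‖ - ‖x‖ ≤ ‖x - ξ₁‖ := by
      rw [← norm_sub_rev]; exact norm_sub_norm_le ξ₁ x
    have h4 : ‖x‖ - ‖y‖ ≤ ‖x - y‖ := norm_sub_norm_le x y
    rw [hξ] at h3
    linarith
  -- denominator ≥ 1 on S × T
  have hden1 : ∀ x ∈ S, ∀ y ∈ T,
      1 ≤ (1 + ‖x‖ ^ p) * (1 + ‖y‖ ^ p) * ‖x - y‖ ^ p := by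
    intro x hx y hy
    have hxy : (1:ℝ) ≤ ‖x - y‖ := le_trans (by linarith) (hdist x hx y hy)
    have h1 : (1:ℝ) ≤ ‖x - y‖ ^ p := Real.one_le_rpow hxy hp.le
    have h2 : (1:ℝ) ≤ 1 + ‖x‖ ^ p := by
      have := Real.rpow_nonneg (norm_nonneg x) p; linarith
    have h3 : (1:ℝ) ≤ 1 + ‖y‖ ^ p := by
      have := Real.rpow_nonneg (norm_nonneg y) p; linarith
    have h23 : 1 * 1 ≤ (1 + ‖x‖ ^ p) * (1 + ‖y‖ ^ p) :=
      mul_le_mul h2 h3 zero_le_one (by linarith)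
    have := mul_le_mul h23 h1 zero_le_one (by nlinarith)
    linarith
  have hg_nonneg : ∀ x y : E, 0 ≤ g x y := by
    intro x y
    apply inv_nonneg.2
    have := Real.rpow_nonneg (norm_nonneg x) p
    have := Real.rpow_nonneg (norm_nonneg y) p
    have := Real.rpow_nonneg (norm_nonneg (x - y)) p
    positivity
  have hg_le_one : ∀ x ∈ S, ∀ y ∈ T, g x y ≤ 1 := by
    intro x hx y hy
    simp only [hg_def]
    have h := hden1 x hx y hy
    calc ((1 + ‖x‖ ^ p) * (1 + ‖y‖ ^ p) * ‖x - y‖ ^ p)⁻¹ ≤ 1⁻¹ :=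
          inv_anti₀ one_pos h
      _ = 1 := inv_one
  -- upper bound on denominator for y in unit ball
  have hD1 : (1:ℝ) ≤ d ^ p := Real.one_le_rpow (by linarith) hp.le
  have hden_ub : ∀ x ∈ S, ∀ y ∈ ball (0 : E) 1,
      (1 + ‖x‖ ^ p) * (1 + ‖y‖ ^ p) * ‖x - y‖ ^ p ≤ K * (d ^ p) ^ 2 := by
    intro x hx y hy
    have hy1 : ‖y‖ < 1 := by rwa [mem_ball_zero_iff] at hy
    have hx2 : ‖x‖ ≤ 2 * d := by have := hxnorm x hx; linarith
    have h2d : ((2:ℝ) * d) ^ p = 2 ^ p * d ^ p :=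
      Real.mul_rpow (by norm_num) hd0.le
    have hxp : ‖x‖ ^ p ≤ 2 ^ p * d ^ p := by
      rw [← h2d]
      exact Real.rpow_le_rpow (norm_nonneg x) hx2 hp.le
    have h1 : 1 + ‖x‖ ^ p ≤ (1 + 2 ^ p) * d ^ p := by nlinarith
    have hyp : ‖y‖ ^ p ≤ 1 := Real.rpow_le_one (norm_nonneg y) hy1.le hp.le
    have h2 : 1 + ‖y‖ ^ p ≤ 2 := by linarith
    have hxy : ‖x - y‖ ≤ 2 * d := by
      have h5 : ‖x - y‖ ≤ ‖x‖ + ‖y‖ := norm_sub_le x y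
      have h6 := hxnorm x hx
      linarith
    have h3 : ‖x - y‖ ^ p ≤ 2 ^ p * d ^ p := by
      rw [← h2d]
      exact Real.rpow_le_rpow (norm_nonneg _) hxy hp.le
    have hA : (0:ℝ) ≤ 1 + ‖x‖ ^ p := by
      have := Real.rpow_nonneg (norm_nonneg x) p; linarith
    have hB : (0:ℝ) ≤ 1 + ‖y‖ ^ p := by
      have := Real.rpow_nonneg (norm_nonneg y) p; linarith
    have hC : (0:ℝ) ≤ ‖x - y‖ ^ p := Real.rpow_nonneg (norm_nonneg _) p
    have hdp : (0:ℝ) < d ^ p := Real.rpow_pos_of_pos hd0 p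
    have hAB : (1 + ‖x‖ ^ p) * (1 + ‖y‖ ^ p) ≤ ((1 + 2 ^ p) * d ^ p) * 2 :=
      mul_le_mul h1 h2 hB (by positivity)
    calc (1 + ‖x‖ ^ p) * (1 + ‖y‖ ^ p) * ‖x - y‖ ^ p
        ≤ ((1 + 2 ^ p) * d ^ p) * 2 * (2 ^ p * d ^ p) :=
          mul_le_mul hAB h3 hC (by positivity)
      _ = K * (d ^ p) ^ 2 := by rw [hK_def]; ring
  -- measurability of g
  have hg_meas : Measurable fun z : E × E => g z.1 z.2 := by
    simp only [hg_def]
    apply Measurable.inv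
    apply Measurable.mul
    apply Measurable.mul
    · exact (measurable_const.add (measurable_fst.norm.pow measurable_const))
    · exact (measurable_const.add (measurable_snd.norm.pow measurable_const))
    · exact (measurable_fst.sub measurable_snd).norm.pow measurable_const
  haveI hfinT : IsFiniteMeasure (volume.restrict T) :=
    ⟨by rw [Measure.restrict_apply_univ]; exact measure_ball_lt_top⟩
  haveI hfinS : IsFiniteMeasure (volume.restrict S) :=
    ⟨by rw [Measure.restrict_apply_univ]; exact measure_ball_lt_top⟩
  -- integrability of the inner integrals
  have hg_int : ∀ x ∈ S, IntegrableOn (g x) T volume := by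
    intro x hx
    apply Integrable.mono' (integrable_const (1:ℝ))
      ((hg_meas.comp measurable_prodMk_left).aestronglyMeasurable)
    filter_upwards [ae_restrict_mem measurableSet_ball] with y hy
    simpa [Real.norm_eq_abs, abs_of_nonneg (hg_nonneg x y)] using hg_le_one x hx y hy
  -- joint integrability
  have hg_int2 : Integrable (fun z : E × E => g z.1 z.2)
      ((volume.restrict S).prod (volume.restrict T)) := by
    apply Integrable.mono' (integrable_const (1:ℝ)) hg_meas.aestronglyMeasurable
    rw [Measure.prod_restrict]
    filter_upwards [ae_restrict_mem (measurableSet_ball.prod measurableSet_ball)]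
      with z hz
    simpa [Real.norm_eq_abs, abs_of_nonneg (hg_nonneg z.1 z.2)] using
      hg_le_one z.1 hz.1 z.2 hz.2
  have hF_int : IntegrableOn (fun x => ∫ y in T, g x y) S volume :=
    hg_int2.integral_prod_left
  -- volumes
  have hvolT1 : (volume (ball (0 : E) 1)).toReal = ω := rfl
  have hvolS : (volume S).toReal = (d / 8) ^ N * ω := by
    rw [hS_def, Measure.addHaar_ball volume ξ₁ hr.le, finrank_euclideanSpace_fin,
      ENNReal.toReal_mul, ENNReal.toReal_ofReal (by positivity)]
  set c₂ : ℝ := (K * (d ^ p) ^ 2)⁻¹ * ω with hc₂_def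
  -- pointwise lower bound for the inner integral
  have hinner : ∀ x ∈ S, c₂ ≤ ∫ y in T, g x y := by
    intro x hx
    have hsub_int : IntegrableOn (g x) (ball (0 : E) 1) volume :=
      (hg_int x hx).mono_set hTsub
    have h1 : ∫ y in ball (0 : E) 1, g x y ≤ ∫ y in T, g x y := by
      apply setIntegral_mono_set (hg_int x hx)
        (Filter.Eventually.of_forall fun y => hg_nonneg x y)
        (HasSubset.Subset.eventuallyLE hTsub)
    have h2 : (K * (d ^ p) ^ 2)⁻¹ * (volume (ball (0 : E) 1)).toReal
        ≤ ∫ y in ball (0 : E) 1, g x y := by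
      apply setIntegral_ge_of_const_le_real measurableSet_ball measure_ball_lt_top.ne
        (fun y hy => ?_) hsub_int
      have hpos : (0:ℝ) < (1 + ‖x‖ ^ p) * (1 + ‖y‖ ^ p) * ‖x - y‖ ^ p :=
        lt_of_lt_of_le one_pos (hden1 x hx y (hTsub hy))
      exact inv_anti₀ hpos (hden_ub x hx y hy)
    rw [hvolT1] at h2
    exact le_trans h2 h1
  have houter : c₂ * (volume S).toReal ≤ ∫ x in S, ∫ y in T, g x y :=
    setIntegral_ge_of_const_le_real measurableSet_ball measure_ball_lt_top.ne hinner hF_int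
  -- final arithmetic
  have hdp : (0:ℝ) < d ^ p := Real.rpow_pos_of_pos hd0 p
  have key : c₂ * (volume S).toReal = K⁻¹ * ω ^ 2 / 8 ^ N * d ^ (-((N:ℝ) + 4 * s)) := by
    rw [hvolS, hc₂_def]
    have hDD : ((d ^ p) ^ 2)⁻¹ * d ^ ((N:ℝ)) = d ^ (-((N:ℝ) + 4 * s)) := by
      rw [← Real.rpow_natCast (d ^ p) 2, ← Real.rpow_mul hd0.le,
        ← Real.rpow_neg hd0.le, ← Real.rpow_add hd0]
      congr 1
      simp only [hp_def]
      push_cast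
      ring
    have hn : (d:ℝ) ^ (N:ℕ) = d ^ ((N:ℝ)) := (Real.rpow_natCast d N).symm
    rw [mul_inv, div_pow]
    rw [show K⁻¹ * ((d ^ p) ^ 2)⁻¹ * ω * (d ^ N / 8 ^ N * ω)
        = K⁻¹ * ω ^ 2 / 8 ^ N * (((d ^ p) ^ 2)⁻¹ * d ^ (N:ℕ)) by ring]
    rw [hn, hDD]
  calc K⁻¹ * ω ^ 2 / 8 ^ N * d ^ (-((N:ℝ) + 4 * s))
      = c₂ * (volume S).toReal := key.symm
    _ ≤ ∫ x in S, ∫ y in T, g x y := houter
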